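/- If H is a proper connected subgraph of a connected directed graph G, then there exists a connected subgraph K of G such that H is a proper subgraph of K and c(K) = c(H) + 1. -/

import Mathlib

open scoped Classical

namespace Money

/-- A finite simple directed graph without loops, on a subset of `Fin n`. -/
structure Digraph (n : ℕ) where
  verts : Finset (Fin n)
  edges : Finset (Fin n × Fin n)
  mem_verts : ∀ e ∈ edges, e.1 ∈ verts ∧ e.2 ∈ verts
  no_loops : ∀ e ∈ edges, e.1 ≠ e.2

namespace Digraph

variable {n : ℕ}

/-- There is a directed path (possibly empty) from `i` to `j`. -/
def Reaches (G : Digraph n) : Fin n → Fin n → Prop :=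
  Relation.ReflTransGen fun a b => (a, b) ∈ G.edges

/-- `G` is connected: nonempty, and any vertex reaches any other by a directed path. -/
def Connected (G : Digraph n) : Prop :=
  G.verts.Nonempty ∧ ∀ i ∈ G.verts, ∀ j ∈ G.verts, G.Reaches i j

/-- `T` is (the edge set of) a spanning `i`-tree of `G`: every vertex `j ≠ i`
has a unique directed path in `T` to `i`. -/
def IsSpanTree (G : Digraph n) (i : Fin n) (T : Finset (Fin n × Fin n)) : Prop :=
  T ⊆ G.edges ∧
  (∀ j ∈ G.verts, j ≠ i → ∃! k, (j, k) ∈ T) ∧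
  (∀ k, (i, k) ∉ T) ∧
  ∀ j ∈ G.verts, Relation.ReflTransGen (fun a b => (a, b) ∈ T) j i

/-- The spanning-tree price of vertex `i` at edge weights `b`. -/
noncomputable def price (G : Digraph n) (i : Fin n) (b : Fin n × Fin n → ℝ) : ℝ :=
  ∑ T ∈ G.edges.powerset.filter (fun T => G.IsSpanTree i T), ∏ e ∈ T, b e

/-- The price-ratio function `b ↦ p_i(b)/p_j(b)`. -/
noncomputable def priceRatio (G : Digraph n) (i j : Fin n) (b : Fin n × Fin n → ℝ) : ℝ :=
  G.price i b / G.price j b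

/-- An edge coordinate `e` is influential for `f` (as a function on positive
weight vectors on the edges of `G`). -/
def Influential (G : Digraph n) (f : (Fin n × Fin n → ℝ) → ℝ) (e : Fin n × Fin n) : Prop :=
  ∃ b b' : Fin n × Fin n → ℝ,
    (∀ e' ∈ G.edges, 0 < b e') ∧ (∀ e' ∈ G.edges, 0 < b' e') ∧
    (∀ e', e' ≠ e → b e' = b' e') ∧ f b ≠ f b'

/-- `π_ij(G)`: the number of influential edges of the price-ratio `p_i/p_j`. -/
noncomputable def priceCplxPair (G : Digraph n) (i j : Fin n) : ℕ :=
  (G.edges.filter (fun e => G.Influential (G.priceRatio i j) e)).card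

/-- The price complexity `π(G) = max_{i ≠ j} π_ij(G)`. -/
noncomputable def priceComplexity (G : Digraph n) : ℕ :=
  ((G.verts ×ˢ G.verts).filter fun p => p.1 ≠ p.2).sup fun p => G.priceCplxPair p.1 p.2

/-- There is a directed walk of length `k` from `i` to `j`. -/
def HasWalk (G : Digraph n) (i j : Fin n) (k : ℕ) : Prop :=
  ∃ g : ℕ → Fin n, g 0 = i ∧ g k = j ∧ ∀ t < k, (g t, g (t + 1)) ∈ G.edges

/-- Length of a shortest directed path from `i` to `j`. -/
noncomputable def dist (G : Digraph n) (i j : Fin n) : ℕ := sInf {k | G.HasWalk i j k}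

/-- The time complexity `τ(G)`: the diameter of `G`. -/
noncomputable def timeComplexity (G : Digraph n) : ℕ :=
  ((G.verts ×ˢ G.verts).filter fun p => p.1 ≠ p.2).sup fun p => G.dist p.1 p.2

def outdeg (G : Digraph n) (v : Fin n) : ℕ := (G.edges.filter fun e => e.1 = v).card

def indeg (G : Digraph n) (v : Fin n) : ℕ := (G.edges.filter fun e => e.2 = v).card

/-- A directed cycle: connected, and every vertex has exactly one outgoing
and one incoming edge. -/
def IsCycleGraph (G : Digraph n) : Prop :=
  G.Connected ∧ ∀ v ∈ G.verts, G.outdeg v = 1 ∧ G.indeg v = 1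

/-- `P` is a (simple) directed path from `s` to `t`, `s ≠ t`. -/
def IsPathGraph (P : Digraph n) (s t : Fin n) : Prop :=
  s ≠ t ∧ s ∈ P.verts ∧ t ∈ P.verts ∧
  (∀ v ∈ P.verts, P.Reaches s v ∧ P.Reaches v t) ∧
  (∀ v ∈ P.verts, v ≠ t → P.outdeg v = 1) ∧ P.outdeg t = 0 ∧
  (∀ v ∈ P.verts, v ≠ s → P.indeg v = 1) ∧ P.indeg s = 0

/-- Union of two digraphs. -/
def union (G H : Digraph n) : Digraph n where
  verts := G.verts ∪ H.verts
  edges := G.edges ∪ H.edges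
  mem_verts := by
    intro e he
    rcases Finset.mem_union.mp he with h | h
    · exact ⟨Finset.mem_union_left _ (G.mem_verts e h).1,
        Finset.mem_union_left _ (G.mem_verts e h).2⟩
    · exact ⟨Finset.mem_union_right _ (H.mem_verts e h).1,
        Finset.mem_union_right _ (H.mem_verts e h).2⟩
  no_loops := by
    intro e he
    rcases Finset.mem_union.mp he with h | h
    · exact G.no_loops e h
    · exact H.no_loops e h

/-- A chorded cycle: a directed cycle `C` together with a directed path `P`
joining two distinct vertices of `C`, otherwise disjoint from `C`. -/
def IsChordedCycle (G : Digraph n) : Prop :=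
  ∃ (C P : Digraph n) (s t : Fin n),
    C.IsCycleGraph ∧ P.IsPathGraph s t ∧ s ∈ C.verts ∧ t ∈ C.verts ∧
    P.verts ∩ C.verts = {s, t} ∧ Disjoint C.edges P.edges ∧ G = C.union P

/-- A `k`-rose: `k` directed cycles sharing a single common vertex, otherwise
pairwise disjoint.  A `0`-rose is a single vertex. -/
def IsRose (G : Digraph n) (k : ℕ) : Prop :=
  ∃ (j : Fin n) (C : Fin k → Digraph n),
    (∀ i, (C i).IsCycleGraph) ∧ (∀ i, j ∈ (C i).verts) ∧
    (∀ i i', i ≠ i' → (C i).verts ∩ (C i').verts = {j}) ∧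
    G.verts = insert j (Finset.univ.biUnion fun i => (C i).verts) ∧
    G.edges = Finset.univ.biUnion fun i => (C i).edges

/-- `H` is a subgraph of `G` (obtained by deleting some edges and vertices). -/
def IsSubgraph (H G : Digraph n) : Prop := H.verts ⊆ G.verts ∧ H.edges ⊆ G.edges

/-- The circuit rank `c(G) = e(G) - v(G) + 1`. -/
def circuitRank (G : Digraph n) : ℤ := (G.edges.card : ℤ) - (G.verts.card : ℤ) + 1

/-- The edge `ij` is collapsible. -/
def Collapsible (G : Digraph n) (i j : Fin n) : Prop :=
  (i, j) ∈ G.edges ∧ G.outdeg i = 1 ∧ (j, i) ∉ G.edges ∧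
  ∀ k, ¬((k, i) ∈ G.edges ∧ (k, j) ∈ G.edges)

/-- `G` is rigid: no collapsible edges. -/
def Rigid (G : Digraph n) : Prop := ∀ i j, ¬G.Collapsible i j

/-- `k` covers the ordinary vertex `i` (whose unique outgoing edge is `ij`). -/
def Covers (G : Digraph n) (k i : Fin n) : Prop :=
  G.outdeg i = 1 ∧ ∃ j, (i, j) ∈ G.edges ∧
    (((k, i) ∈ G.edges ∧ (k, j) ∈ G.edges) ∨ (k = j ∧ (j, i) ∈ G.edges))

/-- A star on all of `Fin n`: a center joined to every other vertex by a pair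
of oppositely directed edges, and no other edges. -/
def IsStar (G : Digraph n) : Prop :=
  ∃ c : Fin n, G.verts = Finset.univ ∧
    G.edges = Finset.univ.filter fun e => (e.1 = c ∧ e.2 ≠ c) ∨ (e.2 = c ∧ e.1 ≠ c)

/-- The complete directed graph on all of `Fin n`. -/
def IsComplete (G : Digraph n) : Prop :=
  G.verts = Finset.univ ∧ G.edges = Finset.univ.filter fun e => e.1 ≠ e.2

/-- A chorded triangle: a 3-cycle `u → v → w → u` together with the
bidirected pair between `u` and `w`. -/
def IsChordedTriangle (T : Digraph n) : Prop :=
  ∃ u v w : Fin n, u ≠ v ∧ v ≠ w ∧ u ≠ w ∧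
    T.verts = {u, v, w} ∧ T.edges = {(u, w), (w, u), (u, v), (v, w)}

end Digraph

end Money

namespace Money.Digraph

variable {n : ℕ}

/-- Edges of the path `a → L → b`. -/
def pathEdges (a : Fin n) : List (Fin n) → Fin n → Finset (Fin n × Fin n)
  | [], b => {(a, b)}
  | x :: L, b => insert (a, x) (pathEdges x L b)

lemma pathEdges_fst_mem {a b u v : Fin n} {L : List (Fin n)}
    (h : (u, v) ∈ pathEdges a L b) : u ∈ a :: L := by
  induction L generalizing a with
  | nil => simp [pathEdges] at h; simp [h.1]
  | cons x L ih =>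
      simp only [pathEdges, Finset.mem_insert, Prod.mk.injEq] at h
      rcases h with ⟨h1, _⟩ | h
      · simp [h1]
      · have := ih h
        simp only [List.mem_cons] at this ⊢
        tauto

lemma pathEdges_snd_mem {a b u v : Fin n} {L : List (Fin n)}
    (h : (u, v) ∈ pathEdges a L b) : v ∈ L ++ [b] := by
  induction L generalizing a with
  | nil => simp [pathEdges] at h; simp [h.2]
  | cons x L ih =>
      simp only [pathEdges, Finset.mem_insert, Prod.mk.injEq] at h
      rcases h with ⟨_, h2⟩ | h
      · simp [h2]
      · have := ih h
        simp only [List.mem_append, List.mem_cons, List.mem_singleton] at this ⊢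
        tauto

lemma exists_pathEdge_fst {a b : Fin n} {L : List (Fin n)} :
    ∀ y ∈ a :: L, ∃ z, (y, z) ∈ pathEdges a L b := by
  induction L generalizing a with
  | nil =>
      intro y hy
      simp at hy
      exact ⟨b, by simp [pathEdges, hy]⟩
  | cons x L ih =>
      intro y hy
      rcases List.mem_cons.mp hy with rfl | hy
      · exact ⟨x, by simp [pathEdges]⟩
      · obtain ⟨z, hz⟩ := ih y hy
        exact ⟨z, by simp [pathEdges]; right; exact hz⟩

lemma pathEdges_card {a b : Fin n} {L : List (Fin n)}
    (h : (a :: L).Nodup) : (pathEdges a L b).card = L.length + 1 := by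
  induction L generalizing a with
  | nil => simp [pathEdges]
  | cons x L ih =>
      have hnx : (x :: L).Nodup := (List.nodup_cons.mp h).2
      have hna : a ∉ x :: L := (List.nodup_cons.mp h).1
      have hnotmem : (a, x) ∉ pathEdges x L b := by
        intro hmem
        exact hna (pathEdges_fst_mem hmem)
      simp [pathEdges, Finset.card_insert_of_notMem hnotmem, ih hnx]

lemma pathEdges_subset {a b : Fin n} {L : List (Fin n)} {E : Finset (Fin n × Fin n)}
    (h : List.Chain' (fun u v => (u, v) ∈ E) (a :: (L ++ [b]))) :
    pathEdges a L b ⊆ E := by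
  induction L generalizing a with
  | nil =>
      intro p hp
      simp [pathEdges] at hp
      subst hp
      simpa using (List.isChain_cons_cons.mp h).1
  | cons x L ih =>
      simp only [List.cons_append, List.Chain', List.isChain_cons_cons] at h
      intro p hp
      simp only [pathEdges, Finset.mem_insert] at hp
      rcases hp with rfl | hp
      · exact h.1
      · exact ih h.2 hp

lemma pathEdges_reaches_last {a b : Fin n} {L : List (Fin n)} {E : Finset (Fin n × Fin n)}
    (h : pathEdges a L b ⊆ E) :
    ∀ y ∈ a :: L, Relation.ReflTransGen (fun u v => (u, v) ∈ E) y b := by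
  induction L generalizing a with
  | nil =>
      intro y hy
      simp at hy
      subst hy
      exact Relation.ReflTransGen.single (h (by simp [pathEdges]))
  | cons x L ih =>
      have hsub : pathEdges x L b ⊆ E := fun p hp => h (by simp [pathEdges]; right; exact hp)
      intro y hy
      rcases List.mem_cons.mp hy with rfl | hy
      · exact Relation.ReflTransGen.head (h (by simp [pathEdges])) (ih hsub x (by simp))
      · exact ih hsub y hy

lemma pathEdges_reaches_from_head {a b : Fin n} {L : List (Fin n)} {E : Finset (Fin n × Fin n)}
    (h : pathEdges a L b ⊆ E) :
    ∀ y ∈ a :: L, Relation.ReflTransGen (fun u v => (u, v) ∈ E) a y := by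
  induction L generalizing a with
  | nil =>
      intro y hy
      simp at hy
      subst hy
      exact Relation.ReflTransGen.refl
  | cons x L ih =>
      have hsub : pathEdges x L b ⊆ E := fun p hp => h (by simp [pathEdges]; right; exact hp)
      intro y hy
      rcases List.mem_cons.mp hy with rfl | hy
      · exact Relation.ReflTransGen.refl
      · exact Relation.ReflTransGen.head (h (by simp [pathEdges])) (ih hsub y hy)

lemma pathEdges_mem_cons {a b u v x : Fin n} {L : List (Fin n)}
    (h : (u, v) ∈ pathEdges a (x :: L) b) : u ∈ x :: L ∨ v ∈ x :: L := by
  simp only [pathEdges, Finset.mem_insert, Prod.mk.injEq] at h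
  rcases h with ⟨_, h2⟩ | h
  · right; simp [h2]
  · left; exact pathEdges_fst_mem h

/-- Extraction of a simple path avoiding `H.verts` from a reflexive-transitive walk. -/
lemma extract_path {S : Finset (Fin n)} {E : Finset (Fin n × Fin n)} :
    ∀ {x h : Fin n}, Relation.ReflTransGen (fun a b => (a, b) ∈ E) x h → h ∈ S → x ∉ S →
    ∃ (L : List (Fin n)) (b : Fin n), (x :: L).Nodup ∧ (∀ y ∈ x :: L, y ∉ S) ∧
      b ∈ S ∧ List.Chain' (fun u v => (u, v) ∈ E) (x :: (L ++ [b])) := by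
  intro x h hwalk hh
  induction hwalk using Relation.ReflTransGen.head_induction_on with
  | refl => intro hx; exact absurd hh hx
  | head hedge _ ih =>
      rename_i c d _
      intro hc
      by_cases hd : d ∈ S
      · exact ⟨[], d, by simp, by simpa using hc, hd, by simp [List.Chain', List.isChain_cons_cons]; exact hedge⟩
      · obtain ⟨L, b, hnd, hout, hb, hchain⟩ := ih hd
        by_cases hcmem : c ∈ d :: L
        · -- take the suffix starting at c
          obtain ⟨pre, suf, hsplit⟩ := List.append_of_mem hcmem
          refine ⟨suf, b, ?_, ?_, hb, ?_⟩
          · have : (d :: L).Nodup := hnd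
            rw [hsplit] at this
            exact (List.Nodup.sublist (List.sublist_append_right pre (c :: suf)) this)
          · intro y hy
            apply hout
            rw [hsplit]
            exact List.mem_append_right pre hy
          · apply hchain.suffix
            have : d :: (L ++ [b]) = pre ++ ((c :: suf) ++ [b]) := by
              rw [← List.cons_append, hsplit]; simp
            rw [this]
            exact List.suffix_append pre _
        · exact ⟨d :: L, b, List.nodup_cons.mpr ⟨hcmem, hnd⟩,
            by intro y hy; rcases List.mem_cons.mp hy with rfl | hy;
               exacts [hc, hout y hy],
            hb, List.isChain_cons_cons.mpr ⟨hedge, hchain⟩⟩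

lemma digraph_ext {G K : Digraph n} (hv : G.verts = K.verts) (he : G.edges = K.edges) :
    G = K := by
  cases G; cases K; simp_all

/-- Find a crossing edge. -/
lemma exists_crossing {S : Finset (Fin n)} {E : Finset (Fin n × Fin n)} :
    ∀ {h u : Fin n}, Relation.ReflTransGen (fun a b => (a, b) ∈ E) h u → u ∉ S → h ∈ S →
    ∃ a x, a ∈ S ∧ x ∉ S ∧ (a, x) ∈ E := by
  intro h u hwalk hu
  induction hwalk using Relation.ReflTransGen.head_induction_on with
  | refl => intro hh; exact absurd hh hu
  | head hedge _ ih =>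
      rename_i c d _
      intro hc
      by_cases hd : d ∈ S
      · exact ih hd
      · exact ⟨c, d, hc, hd, hedge⟩

end Money.Digraph

open Money Money.Digraph

/-- any proper connected subgraph `H` of a connected graph `G`
can be augmented inside `G` to a connected `K ⊇ H` with `c(K) = c(H) + 1`. -/
theorem stmt13 {n : ℕ} (G H : Money.Digraph n) (hG : G.Connected)
    (hH : H.Connected) (hsub : H.IsSubgraph G) (hproper : H ≠ G) :
    ∃ K : Money.Digraph n, K.IsSubgraph G ∧ K.Connected ∧
      H.IsSubgraph K ∧ H ≠ K ∧ K.circuitRank = H.circuitRank + 1 := by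
  classical
  by_cases hcase : ∀ e ∈ G.edges, e.1 ∈ H.verts → e.2 ∈ H.verts → e ∈ H.edges
  · -- no internal missing edge: must grow vertices via a path
    have hvne : H.verts ≠ G.verts := by
      intro hv
      apply hproper
      apply digraph_ext hv
      apply Finset.Subset.antisymm hsub.2
      intro e he
      exact hcase e he (hv ▸ (G.mem_verts e he).1) (hv ▸ (G.mem_verts e he).2)
    obtain ⟨u, huG, huH⟩ : ∃ u, u ∈ G.verts ∧ u ∉ H.verts := by
      by_contra hcon
      push_neg at hcon
      exact hvne (Finset.Subset.antisymm hsub.1 hcon)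
    obtain ⟨h0, hh0⟩ := hH.1
    have hh0G := hsub.1 hh0
    obtain ⟨a, x, haH, hxH, haxE⟩ := exists_crossing (hG.2 h0 hh0G u huG) huH hh0
    have hxG : x ∈ G.verts := (G.mem_verts _ haxE).2
    obtain ⟨L, b, hnd, hout, hbH, hchain⟩ := extract_path (hG.2 x hxG h0 hh0G) hh0 hxH
    set P := pathEdges a (x :: L) b with hP
    have hPG : P ⊆ G.edges :=
      pathEdges_subset (List.isChain_cons_cons.mpr ⟨haxE, by simpa [List.Chain'] using hchain⟩)
    have haL : a ∉ x :: L := fun hmem => (hout a hmem) haH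
    have hndA : (a :: x :: L).Nodup := List.nodup_cons.mpr ⟨haL, hnd⟩
    have hPcard : P.card = L.length + 2 := by
      rw [hP, pathEdges_card hndA]
      simp
    have hdisj : Disjoint H.edges P := by
      rw [Finset.disjoint_left]
      rintro ⟨u1, v1⟩ hpH hpP
      rcases pathEdges_mem_cons hpP with hm | hm
      · exact hout _ hm (H.mem_verts _ hpH).1
      · exact hout _ hm (H.mem_verts _ hpH).2
    refine ⟨⟨H.verts ∪ (x :: L).toFinset, H.edges ∪ P, ?_, ?_⟩, ?_, ?_, ?_, ?_, ?_⟩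
    · rintro ⟨u1, v1⟩ hp
      rcases Finset.mem_union.mp hp with hp | hp
      · exact ⟨Finset.mem_union_left _ (H.mem_verts _ hp).1,
          Finset.mem_union_left _ (H.mem_verts _ hp).2⟩
      · constructor
        · rcases List.mem_cons.mp (pathEdges_fst_mem hp) with rfl | hm
          · exact Finset.mem_union_left _ haH
          · exact Finset.mem_union_right _ (List.mem_toFinset.mpr hm)
        · rcases List.mem_append.mp (pathEdges_snd_mem hp) with hm | hm
          · exact Finset.mem_union_right _ (List.mem_toFinset.mpr hm)
          · simp only [List.mem_singleton] at hm
            subst hm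
            exact Finset.mem_union_left _ hbH
    · intro p hp
      rcases Finset.mem_union.mp hp with hp | hp
      · exact H.no_loops p hp
      · exact G.no_loops p (hPG hp)
    · constructor
      · intro v hv
        rcases Finset.mem_union.mp hv with hv | hv
        · exact hsub.1 hv
        · obtain ⟨z, hz⟩ := exists_pathEdge_fst (a := a) (b := b) v
            (List.mem_cons_of_mem a (List.mem_toFinset.mp hv))
          exact (G.mem_verts _ (hPG hz)).1
      · exact Finset.union_subset hsub.2 hPG
    · -- connectedness
      refine ⟨⟨h0, Finset.mem_union_left _ hh0⟩, ?_⟩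
      intro i hi j hj
      show Relation.ReflTransGen (fun u v => (u, v) ∈ H.edges ∪ P) i j
      have hPE : P ⊆ H.edges ∪ P := Finset.subset_union_right
      have hHr : ∀ i' ∈ H.verts, ∀ j' ∈ H.verts,
          Relation.ReflTransGen (fun u v => (u, v) ∈ H.edges ∪ P) i' j' := by
        intro i' hi' j' hj'
        exact Relation.ReflTransGen.mono (fun u v h => Finset.mem_union_left _ h) i' j'
          (hH.2 i' hi' j' hj')
      have hreachb : ∀ y ∈ a :: x :: L,
          Relation.ReflTransGen (fun u v => (u, v) ∈ H.edges ∪ P) y b :=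
        pathEdges_reaches_last hPE
      have hfroma : ∀ y ∈ a :: x :: L,
          Relation.ReflTransGen (fun u v => (u, v) ∈ H.edges ∪ P) a y :=
        pathEdges_reaches_from_head hPE
      rcases Finset.mem_union.mp hi with hi' | hi' <;>
        rcases Finset.mem_union.mp hj with hj' | hj'
      · exact hHr i hi' j hj'
      · exact (hHr i hi' a haH).trans
          (hfroma j (List.mem_cons_of_mem a (List.mem_toFinset.mp hj')))
      · exact (hreachb i (List.mem_cons_of_mem a (List.mem_toFinset.mp hi'))).trans
          (hHr b hbH j hj')
      · exact ((hreachb i (List.mem_cons_of_mem a (List.mem_toFinset.mp hi'))).trans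
          (hHr b hbH a haH)).trans
          (hfroma j (List.mem_cons_of_mem a (List.mem_toFinset.mp hj')))
    · exact ⟨Finset.subset_union_left, Finset.subset_union_left⟩
    · intro hEq
      apply hxH
      rw [congrArg Money.Digraph.verts hEq]
      simp
    · show ((H.edges ∪ P).card : ℤ) - ((H.verts ∪ (x :: L).toFinset).card : ℤ) + 1
        = ((H.edges.card : ℤ) - (H.verts.card : ℤ) + 1) + 1
      have hVdisj : Disjoint H.verts (x :: L).toFinset := by
        rw [Finset.disjoint_left]
        intro v hv hv2
        exact hout v (List.mem_toFinset.mp hv2) hv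
      rw [Finset.card_union_of_disjoint hdisj, Finset.card_union_of_disjoint hVdisj,
        hPcard, List.toFinset_card_of_nodup hnd]
      push_cast
      simp
      ring
  · -- there is a missing edge inside H.verts: add it
    push_neg at hcase
    obtain ⟨e, heG, h1, h2, heH⟩ := hcase
    refine ⟨⟨H.verts, insert e H.edges, ?_, ?_⟩, ?_, ?_, ?_, ?_, ?_⟩
    · intro p hp
      rcases Finset.mem_insert.mp hp with rfl | hp
      · exact ⟨h1, h2⟩
      · exact H.mem_verts p hp
    · intro p hp
      rcases Finset.mem_insert.mp hp with rfl | hp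
      · exact G.no_loops _ heG
      · exact H.no_loops p hp
    · refine ⟨hsub.1, ?_⟩
      intro p hp
      rcases Finset.mem_insert.mp hp with rfl | hp
      · exact heG
      · exact hsub.2 hp
    · refine ⟨hH.1, ?_⟩
      intro i hi j hj
      exact Relation.ReflTransGen.mono (fun u v h => Finset.mem_insert_of_mem h) i j
        (hH.2 i hi j hj)
    · exact ⟨subset_rfl, Finset.subset_insert _ _⟩
    · intro hEq
      apply heH
      rw [congrArg Money.Digraph.edges hEq]
      exact Finset.mem_insert_self _ _
    · show ((insert e H.edges).card : ℤ) - (H.verts.card : ℤ) + 1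
        = ((H.edges.card : ℤ) - (H.verts.card : ℤ) + 1) + 1
      rw [Finset.card_insert_of_notMem heH]
      push_cast
      ring
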